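/- arXiv:2507.05873 — 5 statements merged into one kernel-verified Lean document; each statement's English description precedes it below -/
import Mathlib

section
/- Let Q, Q' be real n×k matrices with orthonormal columns (QᵀQ = Q'ᵀQ' = I_k) and S, S' real symmetric positive definite k×k matrices. If Q·S·Qᵀ = Q'·S'·Q'ᵀ, then there exists G ∈ O(k) with Q' = Q·G and S' = Gᵀ·S·G. (This is the matrix-level injectivity of the bundle diffeomorphism φ : M(n,k) → Sym(n,k), φ([Q,S]) = Q·S·Qᵀ, where M(n,k) = (St(n,k) × Sym⁺(k))/O(k) with (Q,S) ∼ (QG, GᵀSG).) -/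
open Matrix

/-- **Matrix-level injectivity of the bundle diffeomorphism.** If `Q, Q'` have orthonormal
columns, `S, S'` are symmetric positive definite, and `Q * S * Qᵀ = Q' * S' * Q'ᵀ`, then there
exists an orthogonal `G` with `Q' = Q * G` and `S' = Gᵀ * S * G`. -/
theorem bundle_map_injective {n k : ℕ}
    (Q Q' : Matrix (Fin n) (Fin k) ℝ) (hQ : Qᵀ * Q = 1) (hQ' : Q'ᵀ * Q' = 1)
    (S S' : Matrix (Fin k) (Fin k) ℝ)
    (hS : S.PosDef) (hSsymm : S.IsSymm) (hS' : S'.PosDef) (hS'symm : S'.IsSymm)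
    (h : Q * S * Qᵀ = Q' * S' * Q'ᵀ) :
    ∃ G : Matrix (Fin k) (Fin k) ℝ, Gᵀ * G = 1 ∧ Q' = Q * G ∧ S' = Gᵀ * S * G := by
  haveI : Invertible S' := hS'.isUnit.invertible
  set G : Matrix (Fin k) (Fin k) ℝ := Qᵀ * Q' with hG
  -- Q' * S' = Q * S * Qᵀ * Q'
  have h1 : Q' * S' = Q * S * Qᵀ * Q' := by
    have h1' : Q' * S' * (Q'ᵀ * Q') = Q * S * Qᵀ * Q' := by
      rw [← Matrix.mul_assoc, ← h]
    simpa [hQ'] using h1'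
  -- Q * G = Q'
  have key : Q * G * S' = Q' * S' := by
    calc Q * G * S' = Q * (Qᵀ * (Q' * S')) := by
          simp [hG, Matrix.mul_assoc]
      _ = Q * (Qᵀ * (Q * S * Qᵀ * Q')) := by rw [h1]
      _ = Q * (Qᵀ * Q) * S * Qᵀ * Q' := by simp [Matrix.mul_assoc]
      _ = Q * S * Qᵀ * Q' := by rw [hQ]; simp [Matrix.mul_assoc]
      _ = Q' * S' := h1.symm
  have h2 : Q * G = Q' := by
    calc Q * G = Q * G * S' * ⅟S' := by simp [Matrix.mul_assoc]
      _ = Q' * S' * ⅟S' := by rw [key]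
      _ = Q' := by simp [Matrix.mul_assoc]
  have h3 : Gᵀ * G = 1 := by
    calc Gᵀ * G = Q'ᵀ * (Q * G) := by simp [hG, Matrix.transpose_mul, Matrix.mul_assoc]
      _ = 1 := by rw [h2, hQ']
  refine ⟨G, h3, h2.symm, ?_⟩
  calc S' = Q'ᵀ * Q' * S' * (Q'ᵀ * Q') := by simp [hQ']
    _ = Q'ᵀ * (Q' * S' * Q'ᵀ) * Q' := by simp [Matrix.mul_assoc]
    _ = Q'ᵀ * (Q * S * Qᵀ) * Q' := by rw [h]
    _ = (Qᵀ * Q')ᵀ * S * (Qᵀ * Q') := by simp [Matrix.transpose_mul, Matrix.mul_assoc]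
    _ = Gᵀ * S * G := by rw [hG]
end

section
/- Let Q ∈ ℝ^{n×k} and Q_⊥ ∈ ℝ^{n×(n−k)} satisfy QᵀQ = I_k, Q_⊥ᵀQ_⊥ = I_{n−k}, QᵀQ_⊥ = 0. Let D be a symmetric positive definite k×k matrix, B_V, B_W ∈ ℝ^{(n−k)×k}, and T_V, T_W symmetric k×k matrices. Then trace( Q_⊥Q_⊥ᵀ · (Q_⊥B_V D Qᵀ + Q D B_Vᵀ Q_⊥ᵀ + Q T_V Qᵀ) · Q D⁻¹ Qᵀ · (Q_⊥B_W D Qᵀ + Q D B_Wᵀ Q_⊥ᵀ + Q T_W Qᵀ) ) = trace(B_V · D · B_Wᵀ). (This computes the horizontal part of the pullback of the Bures–Wasserstein metric to the bundle M(n,k).) -/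
open Matrix

/-- **Horizontal part of the pulled-back Bures–Wasserstein metric.** With `[Q Qp]` an
orthogonal completion, `D` symmetric positive definite, `B_V, B_W` arbitrary and `T_V, T_W`
symmetric, the horizontal Bures–Wasserstein pairing of the tangent images equals
`trace (B_V * D * B_Wᵀ)`. -/
theorem horizontal_metric_pullback {n k : ℕ}
    (Q : Matrix (Fin n) (Fin k) ℝ) (Qp : Matrix (Fin n) (Fin (n - k)) ℝ)
    (hQ : Qᵀ * Q = 1) (hQp : Qpᵀ * Qp = 1) (horth : Qᵀ * Qp = 0)
    (D : Matrix (Fin k) (Fin k) ℝ) (hD : D.PosDef) (hDsymm : D.IsSymm)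
    (BV BW : Matrix (Fin (n - k)) (Fin k) ℝ)
    (TV TW : Matrix (Fin k) (Fin k) ℝ) (hTV : TV.IsSymm) (hTW : TW.IsSymm) :
    (Qp * Qpᵀ * (Qp * BV * D * Qᵀ + Q * D * BVᵀ * Qpᵀ + Q * TV * Qᵀ) *
        (Q * D⁻¹ * Qᵀ) *
        (Qp * BW * D * Qᵀ + Q * D * BWᵀ * Qpᵀ + Q * TW * Qᵀ)).trace =
      (BV * D * BWᵀ).trace := by
  have hQpQ : Qpᵀ * Q = 0 := by
    have := congrArg Matrix.transpose horth
    simpa [Matrix.transpose_mul] using this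
  have hDinv : D * D⁻¹ = 1 := Matrix.mul_nonsing_inv D (isUnit_iff_ne_zero.mpr hD.det_pos.ne')
  have h1 : ∀ m (X : Matrix (Fin k) (Fin m) ℝ), Qᵀ * (Q * X) = X := by
    intro m X; rw [← Matrix.mul_assoc, hQ, Matrix.one_mul]
  have h2 : ∀ m (X : Matrix (Fin (n-k)) (Fin m) ℝ), Qpᵀ * (Qp * X) = X := by
    intro m X; rw [← Matrix.mul_assoc, hQp, Matrix.one_mul]
  have h3 : ∀ m (X : Matrix (Fin (n-k)) (Fin m) ℝ), Qᵀ * (Qp * X) = 0 := by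
    intro m X; rw [← Matrix.mul_assoc, horth, Matrix.zero_mul]
  have h4 : ∀ m (X : Matrix (Fin k) (Fin m) ℝ), Qpᵀ * (Q * X) = 0 := by
    intro m X; rw [← Matrix.mul_assoc, hQpQ, Matrix.zero_mul]
  have h5 : ∀ m (X : Matrix (Fin k) (Fin m) ℝ), D * (D⁻¹ * X) = X := by
    intro m X; rw [← Matrix.mul_assoc, hDinv, Matrix.one_mul]
  simp only [Matrix.mul_add, Matrix.add_mul, Matrix.mul_assoc, h1, h2, h3, h4, h5,
    Matrix.mul_zero, Matrix.zero_mul, add_zero, zero_add, Matrix.mul_one]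
  have t1 : (Qp * (BV * (D * (BWᵀ * Qpᵀ)))).trace = (BV * (D * BWᵀ)).trace := by
    rw [Matrix.trace_mul_comm]
    simp only [Matrix.mul_assoc, hQp, Matrix.mul_one]
  have t2 : (Qp * (BV * (TW * Qᵀ))).trace = 0 := by
    rw [Matrix.trace_mul_comm]
    simp only [Matrix.mul_assoc, horth, Matrix.mul_zero, Matrix.trace_zero]
  simp [Matrix.trace_add, t1, t2]
end

section
/- Let θ₀ ∈ ℝ, d₀ > 0, b₀ ≠ 0, s₀ ∈ ℝ. Set r₀ = s₀/b₀ and C = b₀(r₀² + 1), and define for t ∈ ℝ: b(t) = C/((Ct + r₀)² + 1), s(t) = C(Ct + r₀)/((Ct + r₀)² + 1), d(t) = d₀((Ct + r₀)² + 1)/(r₀² + 1), θ(t) = θ₀ + arctan(Ct + r₀) − arctan(r₀). Then for every t ∈ ℝ these functions satisfy the geodesic system θ'(t) = b(t), d'(t) = 2·d(t)·s(t), b'(t) = −2·b(t)·s(t), s'(t) = b(t)² − s(t)², with initial conditions θ(0) = θ₀, d(0) = d₀, b(0) = b₀, s(0) = s₀. -/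
/-- **Closed-form Bures–Wasserstein geodesics in `M(2,1)` with nonzero horizontal velocity.**
With `r₀ = s₀ / b₀`, `C = b₀ (r₀² + 1)` and
`b t = C / ((C t + r₀)² + 1)`, `s t = C (C t + r₀) / ((C t + r₀)² + 1)`,
`d t = d₀ ((C t + r₀)² + 1) / (r₀² + 1)`, `θ t = θ₀ + arctan (C t + r₀) − arctan r₀`,
these functions solve `θ' = b`, `d' = 2 d s`, `b' = -2 b s`, `s' = b² − s²` with the stated
initial conditions. -/
theorem geodesic_M21_closed_form (θ₀ d₀ b₀ s₀ : ℝ) (hd₀ : 0 < d₀) (hb₀ : b₀ ≠ 0)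
    (r₀ C : ℝ) (hr₀ : r₀ = s₀ / b₀) (hC : C = b₀ * (r₀ ^ 2 + 1))
    (b s d θ : ℝ → ℝ)
    (hb : b = fun t => C / ((C * t + r₀) ^ 2 + 1))
    (hs : s = fun t => C * (C * t + r₀) / ((C * t + r₀) ^ 2 + 1))
    (hd : d = fun t => d₀ * ((C * t + r₀) ^ 2 + 1) / (r₀ ^ 2 + 1))
    (hθ : θ = fun t => θ₀ + Real.arctan (C * t + r₀) - Real.arctan r₀) :
    (∀ t : ℝ,
        HasDerivAt θ (b t) t ∧
        HasDerivAt d (2 * d t * s t) t ∧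
        HasDerivAt b (-2 * b t * s t) t ∧
        HasDerivAt s (b t ^ 2 - s t ^ 2) t) ∧
      θ 0 = θ₀ ∧ d 0 = d₀ ∧ b 0 = b₀ ∧ s 0 = s₀ := by

  have hden : ∀ t : ℝ, (C * t + r₀) ^ 2 + 1 ≠ 0 := fun t => by positivity
  have hr1 : r₀ ^ 2 + 1 ≠ 0 := by positivity
  subst hb hs hd hθ
  constructor
  · intro t
    have hu : HasDerivAt (fun t : ℝ => C * t + r₀) C t := by
      simpa using ((hasDerivAt_id t).const_mul C).add_const r₀
    have hden' := hden t
    have hq : HasDerivAt (fun t : ℝ => (C * t + r₀) ^ 2 + 1)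
        (2 * (C * t + r₀) * C) t := by
      simpa [mul_comm] using ((hu.pow 2).add_const 1)
    refine ⟨?_, ?_, ?_, ?_⟩
    · have h1 := (Real.hasDerivAt_arctan (C * t + r₀)).comp t hu
      have h2 := (h1.const_add θ₀).sub_const (Real.arctan r₀)
      refine h2.congr_deriv ?_
      rw [one_div, inv_mul_eq_div, add_comm 1]
    · have h := ((hq.const_mul d₀).div_const (r₀ ^ 2 + 1))
      refine h.congr_deriv ?_
      field_simp
    · have h := (hasDerivAt_const t C).div hq hden'
      refine h.congr_deriv ?_
      field_simp
      ring
    · have h := (hu.const_mul C).div hq hden'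
      refine h.congr_deriv ?_
      field_simp
      ring
  · have h0 : C * 0 + r₀ = r₀ := by ring
    refine ⟨by simp [h0], (by field_simp [h0]; ring), ?_, ?_⟩
    · simp only [h0, hC]
      field_simp
      ring
    · simp only [h0, hC, hr₀]
      field_simp
      ring
end

section
/- Let X, Y be real n×k matrices of full column rank k, let l = rank(XᵀY) and r = k − l. Then there is a bijection between the orthogonal group O(r) and the set I₂ = {R ∈ O(k) | Xᵀ·Y·R = (Xᵀ·Y·Yᵀ·X)^{1/2}}, where (XᵀYYᵀX)^{1/2} denotes the unique symmetric positive semidefinite square root of the positive semidefinite matrix XᵀYYᵀX. -/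
open Matrix

/-- The matrix `Xᵀ * Y * Yᵀ * X` is positive semidefinite. -/
theorem xtyytx_posSemidef {n k : ℕ} (X Y : Matrix (Fin n) (Fin k) ℝ) :
    (Xᵀ * Y * Yᵀ * X).PosSemidef := by
  have h := Matrix.posSemidef_conjTranspose_mul_self (Yᵀ * X)
  simpa [Matrix.conjTranspose_mul, Matrix.mul_assoc] using h

/-- `(Xᵀ Y Yᵀ X)^{1/2}`: the unique symmetric positive semidefinite square root of
`Xᵀ * Y * Yᵀ * X`. -/
noncomputable def bwSqrt {n k : ℕ} (X Y : Matrix (Fin n) (Fin k) ℝ) :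
    Matrix (Fin k) (Fin k) ℝ :=
  (xtyytx_posSemidef X Y).1.eigenvectorUnitary.1 *
    diagonal (Real.sqrt ∘ (xtyytx_posSemidef X Y).1.eigenvalues) *
    (star (xtyytx_posSemidef X Y).1.eigenvectorUnitary : Matrix (Fin k) (Fin k) ℝ)

noncomputable def Matrix.PosSemidef.sqrt {k : ℕ} {M : Matrix (Fin k) (Fin k) ℝ} (hM : M.PosSemidef) :
    Matrix (Fin k) (Fin k) ℝ :=
  hM.1.eigenvectorUnitary.1 * diagonal (Real.sqrt ∘ hM.1.eigenvalues) *
    (star hM.1.eigenvectorUnitary : Matrix (Fin k) (Fin k) ℝ)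

lemma Matrix.PosSemidef.sqrt_conjTranspose {k : ℕ} {M : Matrix (Fin k) (Fin k) ℝ}
    (hM : M.PosSemidef) : hM.sqrtᴴ = hM.sqrt := by
  simp only [Matrix.PosSemidef.sqrt, conjTranspose_mul, star_eq_conjTranspose,
    conjTranspose_conjTranspose, diagonal_conjTranspose, star_trivial, Matrix.mul_assoc]

lemma Matrix.PosSemidef.sqrt_mul_self {k : ℕ} {M : Matrix (Fin k) (Fin k) ℝ}
    (hM : M.PosSemidef) : hM.sqrt * hM.sqrt = M := by
  have hU : (star hM.1.eigenvectorUnitary : Matrix (Fin k) (Fin k) ℝ) * hM.1.eigenvectorUnitary.1 = 1 :=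
    Unitary.coe_star_mul_self _
  have hD : diagonal (Real.sqrt ∘ hM.1.eigenvalues) * diagonal (Real.sqrt ∘ hM.1.eigenvalues)
      = diagonal (RCLike.ofReal ∘ hM.1.eigenvalues) := by
    rw [diagonal_mul_diagonal]
    congr 1; funext i
    simp [Real.mul_self_sqrt (hM.eigenvalues_nonneg i)]
  conv_rhs => rw [hM.1.spectral_theorem, Unitary.conjStarAlgAut_apply]
  simp only [Matrix.PosSemidef.sqrt, Matrix.mul_assoc]
  rw [← Matrix.mul_assoc (star (hM.1.eigenvectorUnitary.1 : Matrix (Fin k) (Fin k) ℝ))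
    hM.1.eigenvectorUnitary.1, hU, Matrix.one_mul, ← Matrix.mul_assoc (diagonal _) (diagonal _), hD]

noncomputable section BWAux

open scoped RealInnerProductSpace



open scoped RealInnerProductSpace

lemma sqrt_congr {k : ℕ} {M N : Matrix (Fin k) (Fin k) ℝ} (h : M = N)
    (hM : M.PosSemidef) (hN : N.PosSemidef) : hM.sqrt = hN.sqrt := by
  subst h; rfl

lemma toEL_mul {m : ℕ} (M N : Matrix (Fin m) (Fin m) ℝ) :
    Matrix.toEuclideanLin (M * N) =
      (Matrix.toEuclideanLin M).comp (Matrix.toEuclideanLin N) := by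
  rw [Matrix.toEuclideanLin_eq_toLin]
  exact Matrix.toLin_mul _ _ _ M N

lemma toEL_one {m : ℕ} :
    Matrix.toEuclideanLin (1 : Matrix (Fin m) (Fin m) ℝ) = LinearMap.id := by
  rw [Matrix.toEuclideanLin_eq_toLin]; exact Matrix.toLin_one _

lemma toEL_transpose {m : ℕ} (M : Matrix (Fin m) (Fin m) ℝ) :
    Matrix.toEuclideanLin Mᵀ = LinearMap.adjoint (Matrix.toEuclideanLin M) := by
  rw [← Matrix.conjTranspose_eq_transpose_of_trivial,
    Matrix.toEuclideanLin_conjTranspose_eq_adjoint]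

lemma rank_toEL {m : ℕ} (M : Matrix (Fin m) (Fin m) ℝ) :
    Module.finrank ℝ (LinearMap.range (Matrix.toEuclideanLin M)) = M.rank := by
  rw [Matrix.toEuclideanLin_eq_toLin, ← Matrix.rank_eq_finrank_range_toLin]

/-- Orthogonal matrices correspond to linear isometry equivalences of Euclidean space. -/
def matIso (m : ℕ) :
    {R : Matrix (Fin m) (Fin m) ℝ // Rᵀ * R = 1} ≃
      (EuclideanSpace ℝ (Fin m) ≃ₗᵢ[ℝ] EuclideanSpace ℝ (Fin m)) where
  toFun R :=
    LinearEquiv.isometryOfInner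
      (LinearEquiv.ofLinear (Matrix.toEuclideanLin R.1) (Matrix.toEuclideanLin R.1ᵀ)
        (by rw [← toEL_mul, mul_eq_one_comm.mp R.2, toEL_one])
        (by rw [← toEL_mul, R.2, toEL_one]))
      (by
        intro x y
        simp only [LinearEquiv.ofLinear_apply]
        rw [← LinearMap.adjoint_inner_right, ← toEL_transpose, ← LinearMap.comp_apply,
          ← toEL_mul, R.2, toEL_one, LinearMap.id_apply])
  invFun q :=
    ⟨Matrix.toEuclideanLin.symm q.toLinearEquiv.toLinearMap, by
      apply Matrix.toEuclideanLin.injective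
      rw [toEL_mul, toEL_one, toEL_transpose, LinearEquiv.apply_symm_apply]
      refine LinearMap.ext fun x => ext_inner_right ℝ fun v => ?_
      rw [LinearMap.comp_apply, LinearMap.adjoint_inner_left]
      simpa using q.inner_map_map x v⟩
  left_inv R := Subtype.ext (Matrix.toEuclideanLin.symm_apply_apply R.1)
  right_inv q := by
    apply LinearIsometryEquiv.ext
    intro x
    have h : ⇑(Matrix.toEuclideanLin (Matrix.toEuclideanLin.symm q.toLinearEquiv.toLinearMap)) = ⇑q := by
      rw [LinearEquiv.apply_symm_apply]; rfl
    simpa [LinearEquiv.isometryOfInner] using congrFun h x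

lemma matIso_symm_val {m : ℕ} (q : EuclideanSpace ℝ (Fin m) ≃ₗᵢ[ℝ] EuclideanSpace ℝ (Fin m)) :
    Matrix.toEuclideanLin ((matIso m).symm q).1 = q.toLinearEquiv.toLinearMap :=
  LinearEquiv.apply_symm_apply _ _

lemma matIso_val {m : ℕ} (R : {R : Matrix (Fin m) (Fin m) ℝ // Rᵀ * R = 1}) :
    (matIso m R).toLinearEquiv.toLinearMap = Matrix.toEuclideanLin R.1 := rfl





variable {F : Type*} [NormedAddCommGroup F] [InnerProductSpace ℝ F] [FiniteDimensional ℝ F]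
  (W : Submodule ℝ F)

instance : CompleteSpace W := FiniteDimensional.complete ℝ W

/-- The linear map acting as the identity on `W` and as `q'` on `Wᗮ`. -/
def combineL (q' : Wᗮ ≃ₗᵢ[ℝ] Wᗮ) : F →ₗ[ℝ] F :=
  W.subtype ∘ₗ (Submodule.orthogonalProjectionOnto W).toLinearMap
    + Wᗮ.subtype ∘ₗ q'.toLinearEquiv.toLinearMap ∘ₗ (Submodule.orthogonalProjectionOnto Wᗮ).toLinearMap

lemma combineL_apply (q' : Wᗮ ≃ₗᵢ[ℝ] Wᗮ) (x : F) :
    combineL W q' x = (Submodule.orthogonalProjectionOnto W x : F) + (q' (Submodule.orthogonalProjectionOnto Wᗮ x) : F) := rfl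

lemma combineL_mem_W (q' : Wᗮ ≃ₗᵢ[ℝ] Wᗮ) {w : F} (hw : w ∈ W) :
    combineL W q' w = w := by
  rw [combineL_apply,
    Submodule.orthogonalProjectionOnto_apply_of_mem_orthogonal (W.le_orthogonal_orthogonal hw)]
  simp [Submodule.starProjection_eq_self_iff.mpr hw]

lemma combineL_mem_perp (q' : Wᗮ ≃ₗᵢ[ℝ] Wᗮ) {v : F} (hv : v ∈ Wᗮ) :
    combineL W q' v = q' ⟨v, hv⟩ := by
  have h2 : Submodule.orthogonalProjectionOnto Wᗮ v = ⟨v, hv⟩ :=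
    Subtype.ext (Submodule.starProjection_eq_self_iff.mpr hv)
  rw [combineL_apply, Submodule.orthogonalProjectionOnto_apply_of_mem_orthogonal hv, h2]
  simp

lemma combineL_inner (q' : Wᗮ ≃ₗᵢ[ℝ] Wᗮ) (x y : F) :
    ⟪combineL W q' x, combineL W q' y⟫ = ⟪x, y⟫ := by
  have hx : (Submodule.orthogonalProjectionOnto W x : F) + (Submodule.orthogonalProjectionOnto Wᗮ x : F) = x :=
    Submodule.starProjection_add_starProjection_orthogonal (K := W) x
  have hy : (Submodule.orthogonalProjectionOnto W y : F) + (Submodule.orthogonalProjectionOnto Wᗮ y : F) = y :=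
    Submodule.starProjection_add_starProjection_orthogonal (K := W) y
  rw [combineL_apply, combineL_apply]
  conv_rhs => rw [← hx, ← hy]
  have expand : ∀ a b c d : F, ⟪a + b, c + d⟫ = ⟪a, c⟫ + ⟪a, d⟫ + ⟪b, c⟫ + ⟪b, d⟫ := by
    intros; rw [inner_add_left, inner_add_right, inner_add_right]; ring
  rw [expand, expand]
  have c1 : ⟪((Submodule.orthogonalProjectionOnto W x : F)), ((q' (Submodule.orthogonalProjectionOnto Wᗮ y) : F))⟫ = 0 :=
    Submodule.inner_right_of_mem_orthogonal (Submodule.orthogonalProjectionOnto W x).2 (q' _).2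
  have c2 : ⟪((q' (Submodule.orthogonalProjectionOnto Wᗮ x) : F)), ((Submodule.orthogonalProjectionOnto W y : F))⟫ = 0 :=
    Submodule.inner_left_of_mem_orthogonal (Submodule.orthogonalProjectionOnto W y).2 (q' _).2
  have c3 : ⟪((Submodule.orthogonalProjectionOnto W x : F)), ((Submodule.orthogonalProjectionOnto Wᗮ y : F))⟫ = 0 :=
    Submodule.inner_right_of_mem_orthogonal (Submodule.orthogonalProjectionOnto W x).2 (Submodule.orthogonalProjectionOnto Wᗮ y).2
  have c4 : ⟪((Submodule.orthogonalProjectionOnto Wᗮ x : F)), ((Submodule.orthogonalProjectionOnto W y : F))⟫ = 0 :=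
    Submodule.inner_left_of_mem_orthogonal (Submodule.orthogonalProjectionOnto W y).2 (Submodule.orthogonalProjectionOnto Wᗮ x).2
  have main : ⟪((q' (Submodule.orthogonalProjectionOnto Wᗮ x) : F)), ((q' (Submodule.orthogonalProjectionOnto Wᗮ y) : F))⟫ =
      ⟪((Submodule.orthogonalProjectionOnto Wᗮ x : F)), ((Submodule.orthogonalProjectionOnto Wᗮ y : F))⟫ := by
    rw [← Submodule.coe_inner, ← Submodule.coe_inner, q'.inner_map_map]
  rw [c1, c2, c3, c4, main]

lemma combineL_comp (q' : Wᗮ ≃ₗᵢ[ℝ] Wᗮ) :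
    combineL W q' ∘ₗ combineL W q'.symm = LinearMap.id := by
  refine LinearMap.ext fun x => ?_
  have hx : (Submodule.orthogonalProjectionOnto W x : F) + (Submodule.orthogonalProjectionOnto Wᗮ x : F) = x :=
    Submodule.starProjection_add_starProjection_orthogonal (K := W) x
  rw [LinearMap.comp_apply, LinearMap.id_apply,
    show combineL W q'.symm x
      = ((Submodule.orthogonalProjectionOnto W x : F)) + ((q'.symm (Submodule.orthogonalProjectionOnto Wᗮ x) : F)) from rfl,
    map_add, combineL_mem_W W q' (Submodule.orthogonalProjectionOnto W x).2,
    combineL_mem_perp W q' (q'.symm (Submodule.orthogonalProjectionOnto Wᗮ x)).2,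
    Subtype.coe_eta, q'.apply_symm_apply]
  exact hx

/-- The isometry acting as the identity on `W` and as `q'` on `Wᗮ`. -/
def combine (q' : Wᗮ ≃ₗᵢ[ℝ] Wᗮ) : F ≃ₗᵢ[ℝ] F :=
  LinearEquiv.isometryOfInner
    (LinearEquiv.ofLinear (combineL W q') (combineL W q'.symm)
      (combineL_comp W q')
      (by simpa using combineL_comp W q'.symm))
    (combineL_inner W q')

lemma combine_apply (q' : Wᗮ ≃ₗᵢ[ℝ] Wᗮ) (x : F) : combine W q' x = combineL W q' x := rfl

/-- Isometries of `F` fixing `W` pointwise correspond to isometries of `Wᗮ`. -/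
def fixSubEquiv : {q : F ≃ₗᵢ[ℝ] F // ∀ w ∈ W, q w = w} ≃ (Wᗮ ≃ₗᵢ[ℝ] Wᗮ) where
  toFun q := by
    have hmem : ∀ p : F ≃ₗᵢ[ℝ] F, (∀ w ∈ W, p w = w) → ∀ v ∈ Wᗮ, p v ∈ Wᗮ := by
      intro p hp v hv
      refine (Submodule.mem_orthogonal _ _).mpr fun w hw => ?_
      rw [← hp w hw, p.inner_map_map]
      exact Submodule.inner_right_of_mem_orthogonal hw hv
    have hq' : ∀ w ∈ W, q.1.symm w = w := by
      intro w hw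
      conv_lhs => rw [← q.2 w hw]
      exact q.1.symm_apply_apply w
    exact
      LinearEquiv.isometryOfInner
        (LinearEquiv.ofLinear
          ((q.1.toLinearEquiv.toLinearMap).restrict (hmem q.1 q.2))
          ((q.1.symm.toLinearEquiv.toLinearMap).restrict (hmem q.1.symm hq'))
          (by
            refine LinearMap.ext fun v => Subtype.ext ?_
            simp [LinearMap.restrict_apply])
          (by
            refine LinearMap.ext fun v => Subtype.ext ?_
            simp [LinearMap.restrict_apply]))
        (by
          intro u v
          rw [LinearEquiv.ofLinear_apply, LinearEquiv.ofLinear_apply, Submodule.coe_inner,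
            LinearMap.restrict_apply, LinearMap.restrict_apply]
          simpa using q.1.inner_map_map (u : F) (v : F))
  invFun q' := ⟨combine W q', fun w hw => combineL_mem_W W q' hw⟩
  left_inv q := by
    refine Subtype.ext (LinearIsometryEquiv.ext fun x => ?_)
    have hx : (Submodule.orthogonalProjectionOnto W x : F) + (Submodule.orthogonalProjectionOnto Wᗮ x : F) = x :=
      Submodule.starProjection_add_starProjection_orthogonal (K := W) x
    rw [combine_apply, combineL_apply]
    conv_rhs => rw [← hx]
    rw [map_add, q.2 _ (Submodule.orthogonalProjectionOnto W x).2]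
    rfl
  right_inv q' := by
    refine LinearIsometryEquiv.ext fun v => Subtype.ext ?_
    rw [LinearEquiv.coe_isometryOfInner, LinearEquiv.ofLinear_apply, LinearMap.restrict_apply]
    show (combine W q' v : F) = (q' v : F)
    rw [combine_apply, combineL_mem_perp W q' v.2, Subtype.coe_eta]


end BWAux

open scoped RealInnerProductSpace

/-- **Bijection between Grassmannian and Bures–Wasserstein logarithm index sets.** For
`X, Y` of full column rank `k`, with `l = rank (Xᵀ Y)` and `r = k - l`, there is a bijection
between `O(r)` and `I₂ = {R ∈ O(k) | Xᵀ Y R = (Xᵀ Y Yᵀ X)^{1/2}}`. -/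
theorem logarithm_index_bijection {n k : ℕ} (X Y : Matrix (Fin n) (Fin k) ℝ)
    (hX : X.rank = k) (hY : Y.rank = k)
    (l r : ℕ) (hl : l = (Xᵀ * Y).rank) (hr : r = k - l) :
    Nonempty
      ({R : Matrix (Fin r) (Fin r) ℝ // Rᵀ * R = 1} ≃
        {R : Matrix (Fin k) (Fin k) ℝ // Rᵀ * R = 1 ∧ Xᵀ * Y * R = bwSqrt X Y}) := by
  subst hl
  subst hr
  classical
  set A := Xᵀ * Y with hA_def
  have hEq : Xᵀ * Y * Yᵀ * X = A * Aᵀ := by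
    simp [hA_def, Matrix.transpose_mul, Matrix.mul_assoc]
  have hApsd : (A * Aᵀ).PosSemidef := hEq ▸ xtyytx_posSemidef X Y
  set S := hApsd.sqrt with hS_def
  have hbw : bwSqrt X Y = S := sqrt_congr hEq (xtyytx_posSemidef X Y) hApsd
  rw [hbw]
  have hSherm : Sᴴ = S := hApsd.sqrt_conjTranspose
  have hST : Sᵀ = S := by
    rw [← Matrix.conjTranspose_eq_transpose_of_trivial]; exact hSherm
  have hSS : S * S = A * Aᵀ := hApsd.sqrt_mul_self
  have hSrank : S.rank = A.rank := by
    calc S.rank = (S * Sᵀ).rank := (Matrix.rank_self_mul_transpose S).symm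
    _ = A.rank := by rw [hST, hSS, Matrix.rank_self_mul_transpose]
  set s := Matrix.toEuclideanLin S with hs_def
  set a := Matrix.toEuclideanLin Aᵀ with ha_def
  have hadj_s : LinearMap.adjoint s = s := by rw [hs_def, ← toEL_transpose, hST]
  have hself : ∀ u v : EuclideanSpace ℝ (Fin k), ⟪s u, v⟫ = ⟪u, s v⟫ := by
    intro u v
    conv_lhs => rw [← hadj_s]
    rw [LinearMap.adjoint_inner_left]
  have hadj_a : LinearMap.adjoint a = Matrix.toEuclideanLin A := by
    rw [ha_def, ← toEL_transpose, Matrix.transpose_transpose]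
  have hn : ∀ x, ‖a x‖ = ‖s x‖ := by
    intro x
    have h2 : ⟪a x, a x⟫ = ⟪s x, s x⟫ := by
      rw [← LinearMap.adjoint_inner_right a, hadj_a, ha_def, ← LinearMap.comp_apply,
        ← toEL_mul, ← hSS, toEL_mul, LinearMap.comp_apply, ← hs_def]
      exact (hself x (s x)).symm
    rw [real_inner_self_eq_norm_sq, real_inner_self_eq_norm_sq] at h2
    exact (sq_eq_sq₀ (norm_nonneg _) (norm_nonneg _)).mp h2
  have hker : LinearMap.ker a = LinearMap.ker s := by
    ext x
    simp only [LinearMap.mem_ker]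
    constructor <;> intro h
    · have := hn x
      rw [h, norm_zero] at this
      exact norm_eq_zero.mp this.symm
    · have := hn x
      rw [h, norm_zero] at this
      exact norm_eq_zero.mp this
  -- the partial isometry `a x ↦ s x`, as a map on `range a`
  set W' := LinearMap.range a with hW'_def
  let u : W' →ₗ[ℝ] EuclideanSpace ℝ (Fin k) :=
    (LinearMap.range s).subtype ∘ₗ
      (s.quotKerEquivRange.toLinearMap ∘ₗ
        ((Submodule.quotEquivOfEq _ _ hker).toLinearMap ∘ₗ a.quotKerEquivRange.symm.toLinearMap))
  have hu : ∀ (x : EuclideanSpace ℝ (Fin k)) (h : a x ∈ W'), u ⟨a x, h⟩ = s x := by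
    intro x h
    show (LinearMap.range s).subtype
      (s.quotKerEquivRange ((Submodule.quotEquivOfEq _ _ hker)
        (a.quotKerEquivRange.symm ⟨a x, h⟩))) = s x
    rw [LinearMap.quotKerEquivRange_symm_apply_image a x, Submodule.mkQ_apply,
      Submodule.quotEquivOfEq_mk]
    exact LinearMap.quotKerEquivRange_apply_mk s x
  let L : W' →ₗᵢ[ℝ] EuclideanSpace ℝ (Fin k) :=
    ⟨u, by
      rintro ⟨v, x, rfl⟩
      show ‖u ⟨a x, _⟩‖ = _
      refine (congrArg norm (hu x _)).trans ?_
      exact ((hn x).symm : _)⟩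
  have hsurj : Function.Surjective L.extend := by
    have h := LinearMap.surjective_of_injective (f := L.extend.toLinearMap)
      (by simpa using L.extend.injective)
    simpa using h
  let V := LinearIsometryEquiv.ofSurjective L.extend hsurj
  have hV : ∀ x, V (a x) = s x := by
    intro x
    have h1 : V (a x) = L.extend (a x) :=
      congrFun (LinearIsometryEquiv.coe_ofSurjective L.extend hsurj) _
    have h2 := L.extend_apply ⟨a x, LinearMap.mem_range_self a x⟩
    rw [h1]
    rw [show ((⟨a x, LinearMap.mem_range_self a x⟩ : W') :
      EuclideanSpace ℝ (Fin k)) = a x from rfl] at h2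
    rw [h2]
    exact hu x _
  set U := (matIso k).symm V with hU_def
  have hUlin : Matrix.toEuclideanLin U.1 = V.toLinearEquiv.toLinearMap := matIso_symm_val V
  have hUA : U.1 * Aᵀ = S := by
    apply Matrix.toEuclideanLin.injective
    rw [toEL_mul, hUlin, ← ha_def, ← hs_def]
    refine LinearMap.ext fun x => ?_
    exact hV x
  set R₀ := U.1ᵀ with hR₀_def
  have hR₀o : R₀ᵀ * R₀ = 1 := by
    rw [hR₀_def, Matrix.transpose_transpose]
    exact mul_eq_one_comm.mp U.2
  have hR₀o' : R₀ * R₀ᵀ = 1 := by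
    rw [hR₀_def, Matrix.transpose_transpose]
    exact U.2
  have hAR₀ : A * R₀ = S := by
    have h := congrArg Matrix.transpose hUA
    rw [Matrix.transpose_mul, Matrix.transpose_transpose, hST] at h
    rw [hR₀_def]
    exact h
  have hSR₀ : S * R₀ᵀ = A := by
    rw [← hAR₀, Matrix.mul_assoc, hR₀o', Matrix.mul_one]
  let e₁ : {Q : Matrix (Fin k) (Fin k) ℝ // Qᵀ * Q = 1 ∧ S * Q = S} ≃
      {R : Matrix (Fin k) (Fin k) ℝ // Rᵀ * R = 1 ∧ A * R = S} :=
  { toFun := fun Q => ⟨R₀ * Q.1,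
      ⟨by rw [Matrix.transpose_mul, Matrix.mul_assoc, ← Matrix.mul_assoc R₀ᵀ R₀ Q.1, hR₀o,
          Matrix.one_mul, Q.2.1],
       by rw [← Matrix.mul_assoc, hAR₀, Q.2.2]⟩⟩
    invFun := fun R => ⟨R₀ᵀ * R.1,
      ⟨by rw [Matrix.transpose_mul, Matrix.transpose_transpose, Matrix.mul_assoc,
          ← Matrix.mul_assoc R₀ R₀ᵀ R.1, hR₀o', Matrix.one_mul, R.2.1],
       by rw [← Matrix.mul_assoc, hSR₀, R.2.2]⟩⟩
    left_inv := fun Q => Subtype.ext (by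
      show R₀ᵀ * (R₀ * Q.1) = Q.1
      rw [← Matrix.mul_assoc, hR₀o, Matrix.one_mul])
    right_inv := fun R => Subtype.ext (by
      show R₀ * (R₀ᵀ * R.1) = R.1
      rw [← Matrix.mul_assoc, hR₀o', Matrix.one_mul]) }
  have skey : ∀ (Q : Matrix (Fin k) (Fin k) ℝ)
      (q : EuclideanSpace ℝ (Fin k) ≃ₗᵢ[ℝ] EuclideanSpace ℝ (Fin k)),
      Matrix.toEuclideanLin Q = q.toLinearEquiv.toLinearMap →
      (S * Q = S ↔ ∀ w ∈ LinearMap.range s, q w = w) := by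
    intro Q q hq
    have hsq : S * Q = S ↔ ∀ x, s (q x) = s x := by
      constructor
      · intro h x
        have h' := congrArg Matrix.toEuclideanLin h
        rw [toEL_mul, hq, ← hs_def] at h'
        exact LinearMap.congr_fun h' x
      · intro h
        apply Matrix.toEuclideanLin.injective
        rw [toEL_mul, hq, ← hs_def]
        exact LinearMap.ext fun x => h x
    rw [hsq]
    constructor
    · intro h w hw
      obtain ⟨x, rfl⟩ := hw
      have h1 : ∀ z, s (q.symm z) = s z := by
        intro z
        have h2 := h (q.symm z)
        rw [q.apply_symm_apply] at h2
        exact h2.symm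
      refine ext_inner_right ℝ fun y => ?_
      calc ⟪q (s x), y⟫ = ⟪q (s x), q (q.symm y)⟫ := by rw [q.apply_symm_apply]
        _ = ⟪s x, q.symm y⟫ := q.inner_map_map _ _
        _ = ⟪x, s (q.symm y)⟫ := hself _ _
        _ = ⟪x, s y⟫ := by rw [h1]
        _ = ⟪s x, y⟫ := (hself _ _).symm
    · intro h x
      refine ext_inner_right ℝ fun y => ?_
      calc ⟪s (q x), y⟫ = ⟪q x, s y⟫ := hself _ _
        _ = ⟪q x, q (s y)⟫ := by rw [h (s y) (LinearMap.mem_range_self s y)]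
        _ = ⟪x, s y⟫ := q.inner_map_map _ _
        _ = ⟪s x, y⟫ := (hself _ _).symm
  let e₂ : {Q : Matrix (Fin k) (Fin k) ℝ // Qᵀ * Q = 1 ∧ S * Q = S} ≃
      {q : EuclideanSpace ℝ (Fin k) ≃ₗᵢ[ℝ] EuclideanSpace ℝ (Fin k) //
        ∀ w ∈ LinearMap.range s, q w = w} :=
  { toFun := fun Q => ⟨matIso k ⟨Q.1, Q.2.1⟩,
      (skey Q.1 _ (matIso_val ⟨Q.1, Q.2.1⟩).symm).mp Q.2.2⟩
    invFun := fun q => ⟨((matIso k).symm q.1).1,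
      ⟨((matIso k).symm q.1).2, (skey _ q.1 (matIso_symm_val q.1)).mpr q.2⟩⟩
    left_inv := fun Q => Subtype.ext (by
      show (((matIso k).symm ((matIso k) ⟨Q.1, Q.2.1⟩)) :
        {R : Matrix (Fin k) (Fin k) ℝ // Rᵀ * R = 1}).1 = Q.1
      rw [(matIso k).symm_apply_apply])
    right_inv := fun q => Subtype.ext (by
      have h : (⟨((matIso k).symm q.1).1, ((matIso k).symm q.1).2⟩ :
          {R : Matrix (Fin k) (Fin k) ℝ // Rᵀ * R = 1}) = (matIso k).symm q.1 :=
        Subtype.ext rfl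
      show (matIso k) ⟨((matIso k).symm q.1).1, ((matIso k).symm q.1).2⟩ = q.1
      rw [h, (matIso k).apply_symm_apply]) }
  have hWrank : Module.finrank ℝ (LinearMap.range s) = A.rank := by
    rw [hs_def, rank_toEL, hSrank]
  have hperp : Module.finrank ℝ ((LinearMap.range s)ᗮ) = k - A.rank := by
    have h1 := Submodule.finrank_add_finrank_orthogonal (K := LinearMap.range s)
    rw [hWrank] at h1
    have h2 : Module.finrank ℝ (EuclideanSpace ℝ (Fin k)) = k := finrank_euclideanSpace_fin
    rw [h2] at h1
    omega
  let eW : ((LinearMap.range s)ᗮ) ≃ₗᵢ[ℝ] EuclideanSpace ℝ (Fin (k - A.rank)) :=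
    (stdOrthonormalBasis ℝ ((LinearMap.range s)ᗮ)).repr.trans
      (LinearIsometryEquiv.piLpCongrLeft 2 ℝ ℝ (finCongr hperp))
  let e₄ : (((LinearMap.range s)ᗮ) ≃ₗᵢ[ℝ] ((LinearMap.range s)ᗮ)) ≃
      (EuclideanSpace ℝ (Fin (k - A.rank)) ≃ₗᵢ[ℝ] EuclideanSpace ℝ (Fin (k - A.rank))) :=
  { toFun := fun q => (eW.symm.trans q).trans eW
    invFun := fun q => (eW.trans q).trans eW.symm
    left_inv := fun q => by ext x; simp
    right_inv := fun q => by ext x; simp }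
  exact ⟨(((matIso (k - A.rank)).trans e₄.symm).trans
    (fixSubEquiv (LinearMap.range s)).symm).trans (e₂.symm.trans e₁)⟩
end

section
/- Let X, Y be real n×k matrices and suppose XᵀY = U·D·Vᵀ is a singular value decomposition with U, V ∈ O(k) and D diagonal with D_{ii} > 0 for 1 ≤ i ≤ l and D_{ii} = 0 for l < i ≤ k; set r = k − l. Then an orthogonal matrix R ∈ O(k) satisfies Xᵀ·Y·R = (Xᵀ·Y·Yᵀ·X)^{1/2} if and only if R = V · [[I_l, 0],[0, R_r]] · Uᵀ for some R_r ∈ O(r), where [[I_l, 0],[0, R_r]] denotes the block-diagonal k×k matrix with blocks I_l and R_r. -/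
open Matrix

/-- The block-diagonal `k × k` matrix `[[I_l, 0], [0, Rr]]` built from an
`(k−l) × (k−l)` block `Rr`, using the identification `Fin l ⊕ Fin (k−l) ≃ Fin k`. -/
def blockDiagId {k : ℕ} (l : ℕ) (h : l ≤ k)
    (Rr : Matrix (Fin (k - l)) (Fin (k - l)) ℝ) : Matrix (Fin k) (Fin k) ℝ :=
  Matrix.reindex (finSumFinEquiv.trans (finCongr (Nat.add_sub_cancel' h)))
    (finSumFinEquiv.trans (finCongr (Nat.add_sub_cancel' h)))
    (Matrix.fromBlocks 1 0 0 Rr)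

/-- The index equivalence used in `blockDiagId`. -/
def blockEquiv {k : ℕ} (l : ℕ) (h : l ≤ k) : Fin l ⊕ Fin (k - l) ≃ Fin k :=
  finSumFinEquiv.trans (finCongr (Nat.add_sub_cancel' h))

lemma blockEquiv_inl_val {k l : ℕ} (h : l ≤ k) (a : Fin l) :
    ((blockEquiv l h (Sum.inl a) : Fin k) : ℕ) = a := by
  simp [blockEquiv]

lemma blockEquiv_inr_val {k l : ℕ} (h : l ≤ k) (b : Fin (k - l)) :
    ((blockEquiv l h (Sum.inr b) : Fin k) : ℕ) = l + b := by
  simp [blockEquiv]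

lemma blockDiagId_apply {k l : ℕ} (h : l ≤ k)
    (Rr : Matrix (Fin (k - l)) (Fin (k - l)) ℝ) (x y : Fin l ⊕ Fin (k - l)) :
    blockDiagId l h Rr (blockEquiv l h x) (blockEquiv l h y) =
      Matrix.fromBlocks 1 0 0 Rr x y := by
  simp [blockDiagId, blockEquiv, Matrix.reindex_apply, Matrix.submatrix_apply]

/-- Rows with index `< l` of `blockDiagId` agree with the identity. -/
lemma blockDiagId_row_lt {k l : ℕ} (h : l ≤ k)
    (Rr : Matrix (Fin (k - l)) (Fin (k - l)) ℝ) (i j : Fin k) (hi : (i : ℕ) < l) :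
    blockDiagId l h Rr i j = if i = j then 1 else 0 := by
  obtain ⟨x, rfl⟩ := (blockEquiv l h).surjective i
  obtain ⟨y, rfl⟩ := (blockEquiv l h).surjective j
  rw [blockDiagId_apply]
  cases x with
  | inl a =>
    cases y with
    | inl b =>
      simp [Matrix.fromBlocks, Matrix.one_apply, EmbeddingLike.apply_eq_iff_eq]
    | inr b =>
      have hne : blockEquiv l h (Sum.inl a) ≠ blockEquiv l h (Sum.inr b) := by
        simp [EmbeddingLike.apply_eq_iff_eq]
      simp [Matrix.fromBlocks, hne]
  | inr a =>
    exfalso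
    rw [blockEquiv_inr_val] at hi
    omega

/-- The characterization: a matrix whose rows and columns of index `< l` are those
of the identity equals `blockDiagId` of its lower-right block. -/
lemma eq_blockDiagId {k l : ℕ} (h : l ≤ k) (S : Matrix (Fin k) (Fin k) ℝ)
    (hrow : ∀ i j : Fin k, (i : ℕ) < l → S i j = if i = j then 1 else 0)
    (hcol : ∀ i j : Fin k, (j : ℕ) < l → S i j = if i = j then 1 else 0) :
    S = blockDiagId l h
      (fun a b => S (blockEquiv l h (Sum.inr a)) (blockEquiv l h (Sum.inr b))) := by
  ext i j
  obtain ⟨x, rfl⟩ := (blockEquiv l h).surjective i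
  obtain ⟨y, rfl⟩ := (blockEquiv l h).surjective j
  erw [blockDiagId_apply]
  cases x with
  | inl a =>
    have hlt : ((blockEquiv l h (Sum.inl a) : Fin k) : ℕ) < l := by
      rw [blockEquiv_inl_val]; exact a.isLt
    rw [hrow _ _ hlt]
    cases y with
    | inl b =>
      simp [Matrix.fromBlocks, Matrix.one_apply, EmbeddingLike.apply_eq_iff_eq]
    | inr b =>
      have hne : blockEquiv l h (Sum.inl a) ≠ blockEquiv l h (Sum.inr b) := by
        simp [EmbeddingLike.apply_eq_iff_eq]
      simp [Matrix.fromBlocks, hne]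
  | inr a =>
    cases y with
    | inl b =>
      have hlt : ((blockEquiv l h (Sum.inl b) : Fin k) : ℕ) < l := by
        rw [blockEquiv_inl_val]; exact b.isLt
      rw [hcol _ _ hlt]
      have hne : blockEquiv l h (Sum.inr a) ≠ blockEquiv l h (Sum.inl b) := by
        simp [EmbeddingLike.apply_eq_iff_eq]
      simp [Matrix.fromBlocks, hne]
    | inr b =>
      simp [Matrix.fromBlocks]

/-- **Characterization of the Bures–Wasserstein logarithm index set via the SVD.** If
`Xᵀ Y = U D Vᵀ` is a singular value decomposition with `D` diagonal, `D i i > 0` for `i < l`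
and `D i i = 0` for `l ≤ i`, then an orthogonal `R` satisfies `Xᵀ Y R = (Xᵀ Y Yᵀ X)^{1/2}`
iff `R = V * [[I_l, 0], [0, Rr]] * Uᵀ` for some orthogonal `Rr` of size `r = k − l`. -/
theorem logarithm_index_characterization {n k : ℕ} (X Y : Matrix (Fin n) (Fin k) ℝ)
    (U V D : Matrix (Fin k) (Fin k) ℝ)
    (hU : Uᵀ * U = 1) (hV : Vᵀ * V = 1)
    (l : ℕ) (hl : l ≤ k)
    (hdiag : ∀ i j : Fin k, i ≠ j → D i j = 0)
    (hpos : ∀ i : Fin k, (i : ℕ) < l → 0 < D i i)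
    (hzero : ∀ i : Fin k, l ≤ (i : ℕ) → D i i = 0)
    (hSVD : Xᵀ * Y = U * D * Vᵀ)
    (R : Matrix (Fin k) (Fin k) ℝ) (hR : Rᵀ * R = 1) :
    Xᵀ * Y * R = bwSqrt X Y ↔
      ∃ Rr : Matrix (Fin (k - l)) (Fin (k - l)) ℝ,
        Rrᵀ * Rr = 1 ∧ R = V * blockDiagId l hl Rr * Uᵀ := by
  have hUU : U * Uᵀ = 1 := mul_eq_one_comm.mp hU
  have hVV : V * Vᵀ = 1 := mul_eq_one_comm.mp hV
  have hU' : ∀ M : Matrix (Fin k) (Fin k) ℝ, Uᵀ * (U * M) = M := fun M => by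
    rw [← Matrix.mul_assoc, hU, Matrix.one_mul]
  have hU'' : ∀ M : Matrix (Fin k) (Fin k) ℝ, U * (Uᵀ * M) = M := fun M => by
    rw [← Matrix.mul_assoc, hUU, Matrix.one_mul]
  have hV' : ∀ M : Matrix (Fin k) (Fin k) ℝ, Vᵀ * (V * M) = M := fun M => by
    rw [← Matrix.mul_assoc, hV, Matrix.one_mul]
  have hV'' : ∀ M : Matrix (Fin k) (Fin k) ℝ, V * (Vᵀ * M) = M := fun M => by
    rw [← Matrix.mul_assoc, hVV, Matrix.one_mul]
  have hDnn : ∀ i, 0 ≤ D i i := fun i => by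
    rcases lt_or_ge (i : ℕ) l with h | h
    · exact (hpos i h).le
    · rw [hzero i h]
  have hDdiag : D = Matrix.diagonal (fun i => D i i) := by
    ext i j
    by_cases h : i = j
    · subst h; simp
    · rw [Matrix.diagonal_apply_ne _ h, hdiag i j h]
  have hDsym : Dᵀ = D := by
    rw [hDdiag, Matrix.diagonal_transpose]
  have hDpsd : D.PosSemidef := by
    rw [hDdiag]
    exact Matrix.posSemidef_diagonal_iff.mpr hDnn
  have hYX : Yᵀ * X = V * D * Uᵀ := by
    have h := congrArg Matrix.transpose hSVD
    simp only [Matrix.transpose_mul, Matrix.transpose_transpose, hDsym] at h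
    rw [h, Matrix.mul_assoc]
  -- bwSqrt X Y = U * D * Uᵀ
  have hsq : bwSqrt X Y = U * D * Uᵀ := by
    have h1 : (U * D * Uᵀ).PosSemidef := by
      have h2 := hDpsd.mul_mul_conjTranspose_same U
      simpa using h2
    have h3 : (U * D * Uᵀ) ^ 2 = Xᵀ * Y * Yᵀ * X := by
      have h4 : Xᵀ * Y * Yᵀ * X = (Xᵀ * Y) * (Yᵀ * X) := by rw [Matrix.mul_assoc]
      rw [pow_two, h4, hSVD, hYX]
      simp only [Matrix.mul_assoc, hU', hV']
    have hcfc : bwSqrt X Y = cfc Real.sqrt (Xᵀ * Y * Yᵀ * X) := by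
      rw [(xtyytx_posSemidef X Y).1.cfc_eq]
      simp [bwSqrt, IsHermitian.cfc, Function.comp_def, Unitary.conjStarAlgAut_apply]
    open scoped MatrixOrder in
    rw [hcfc, show Real.sqrt = fun x => ((NNReal.sqrt x.toNNReal : NNReal) : ℝ) from funext fun x => Real.sqrt.eq_1 x,
      ← cfc_nnreal_eq_real NNReal.sqrt _ (xtyytx_posSemidef X Y).nonneg, ← CFC.sqrt_eq_cfc]
    open scoped MatrixOrder in
    exact (CFC.sqrt_eq_iff _ _ (xtyytx_posSemidef X Y).nonneg h1.nonneg).mpr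
      (by rw [← pow_two]; exact h3)
  rw [hsq, hSVD]
  set e := blockEquiv l hl with he
  constructor
  · -- forward direction
    intro hmain
    set S := Vᵀ * R * U with hSdef
    have hRS : R = V * S * Uᵀ := by
      rw [hSdef]
      calc R = (V * Vᵀ) * R * (U * Uᵀ) := by
            rw [hVV, hUU, Matrix.one_mul, Matrix.mul_one]
        _ = V * (Vᵀ * R * U) * Uᵀ := by simp only [Matrix.mul_assoc]
    have hDS : D * S = D := by
      have h := congrArg (fun M => Uᵀ * M * U) hmain
      calc D * S = Uᵀ * (U * D * Vᵀ * R) * U := by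
            rw [hSdef]; simp only [Matrix.mul_assoc, hU']
        _ = Uᵀ * (U * D * Uᵀ) * U := by rw [h]
        _ = D := by
            simp only [Matrix.mul_assoc, hU']
            rw [hU, Matrix.mul_one]
    have hSo : Sᵀ * S = 1 := by
      rw [hSdef]
      simp only [Matrix.transpose_mul, Matrix.transpose_transpose]
      simp only [Matrix.mul_assoc, hV'']
      rw [← Matrix.mul_assoc Rᵀ R U, hR, Matrix.one_mul, hU]
    -- rows of S with index < l are identity rows
    have hrow : ∀ i j : Fin k, (i : ℕ) < l → S i j = if i = j then 1 else 0 := by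
      intro i j hi
      have h := congrFun (congrFun hDS i) j
      rw [Matrix.mul_apply] at h
      rw [Finset.sum_eq_single i (fun m _ hmi => by
        rw [hdiag i m (Ne.symm hmi), zero_mul]) (by simp)] at h
      have hne : D i i ≠ 0 := (hpos i hi).ne'
      by_cases hij : i = j
      · subst hij
        rw [if_pos rfl]
        have h' : D i i * S i i = D i i * 1 := by rw [mul_one]; exact h
        exact mul_left_cancel₀ hne h'
      · rw [if_neg hij]
        rw [hdiag i j hij] at h
        exact (mul_eq_zero.mp h).resolve_left hne
    -- columns of S with index < l are identity columns
    have hcol : ∀ i j : Fin k, (j : ℕ) < l → S i j = if i = j then 1 else 0 := by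
      intro i j hj
      have h := congrFun (congrFun hSo j) j
      rw [Matrix.mul_apply] at h
      simp only [Matrix.transpose_apply, Matrix.one_apply_eq] at h
      have hjj : S j j = 1 := by
        have := hrow j j hj
        simpa using this
      have hsum : ∑ m, S m j * S m j = 1 := h
      have hzero' : ∑ m ∈ Finset.univ.erase j, S m j * S m j = 0 := by
        have hsplit := (Finset.add_sum_erase Finset.univ
          (fun m => S m j * S m j) (Finset.mem_univ j)).symm
        simp only [hsum, hjj, one_mul] at hsplit
        linarith
      by_cases hij : i = j
      · subst hij; simp [hjj]
      · rw [if_neg hij]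
        have hterm : S i j * S i j = 0 := by
          refine (Finset.sum_eq_zero_iff_of_nonneg ?_).mp hzero' i ?_
          · intro m _; exact mul_self_nonneg _
          · exact Finset.mem_erase.mpr ⟨hij, Finset.mem_univ i⟩
        exact (mul_self_eq_zero).mp hterm
    have hSblock := eq_blockDiagId hl S hrow hcol
    refine ⟨fun a b => S (blockEquiv l hl (Sum.inr a)) (blockEquiv l hl (Sum.inr b)),
      ?_, by rw [hRS, ← hSblock]⟩
    -- orthogonality of the lower-right block
    ext a b
    show ∑ m, S (blockEquiv l hl (Sum.inr m)) (blockEquiv l hl (Sum.inr a)) *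
      S (blockEquiv l hl (Sum.inr m)) (blockEquiv l hl (Sum.inr b)) =
      (1 : Matrix (Fin (k - l)) (Fin (k - l)) ℝ) a b
    have h := congrFun (congrFun hSo (blockEquiv l hl (Sum.inr a)))
      (blockEquiv l hl (Sum.inr b))
    rw [Matrix.mul_apply] at h
    simp only [Matrix.transpose_apply] at h
    have hsplit : ∑ m : Fin k,
        S m (blockEquiv l hl (Sum.inr a)) * S m (blockEquiv l hl (Sum.inr b)) =
        ∑ x : Fin l ⊕ Fin (k - l),
          S (blockEquiv l hl x) (blockEquiv l hl (Sum.inr a)) *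
          S (blockEquiv l hl x) (blockEquiv l hl (Sum.inr b)) :=
      (Fintype.sum_equiv (blockEquiv l hl) _ _ (fun x => rfl)).symm
    rw [hsplit, Fintype.sum_sum_type] at h
    have hleft : ∑ c : Fin l,
        S (blockEquiv l hl (Sum.inl c)) (blockEquiv l hl (Sum.inr a)) *
        S (blockEquiv l hl (Sum.inl c)) (blockEquiv l hl (Sum.inr b)) = 0 := by
      refine Finset.sum_eq_zero fun c _ => ?_
      have hlt : ((blockEquiv l hl (Sum.inl c) : Fin k) : ℕ) < l := by
        rw [blockEquiv_inl_val]; exact c.isLt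
      have hne : blockEquiv l hl (Sum.inl c) ≠ blockEquiv l hl (Sum.inr a) := by
        simp [EmbeddingLike.apply_eq_iff_eq]
      rw [hrow _ _ hlt, if_neg hne, zero_mul]
    rw [hleft, zero_add] at h
    rw [h, Matrix.one_apply, Matrix.one_apply]
    simp [EmbeddingLike.apply_eq_iff_eq]
  · -- backward direction
    rintro ⟨Rr, hRr, rfl⟩
    have hDB : D * blockDiagId l hl Rr = D := by
      ext i j
      rw [Matrix.mul_apply]
      rw [Finset.sum_eq_single i (fun m _ hmi => by
        rw [hdiag i m (Ne.symm hmi), zero_mul]) (by simp)]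
      rcases lt_or_ge (i : ℕ) l with h | h
      · rw [blockDiagId_row_lt hl Rr i j h]
        by_cases hij : i = j
        · subst hij; simp
        · rw [if_neg hij, mul_zero, hdiag i j hij]
      · rw [hzero i h, zero_mul]
        by_cases hij : i = j
        · subst hij; rw [hzero i h]
        · rw [hdiag i j hij]
    calc U * D * Vᵀ * (V * blockDiagId l hl Rr * Uᵀ)
        = U * (D * (Vᵀ * (V * (blockDiagId l hl Rr * Uᵀ)))) := by
          simp only [Matrix.mul_assoc]
      _ = U * (D * (blockDiagId l hl Rr * Uᵀ)) := by rw [hV']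
      _ = U * (D * blockDiagId l hl Rr * Uᵀ) := by simp only [Matrix.mul_assoc]
      _ = U * D * Uᵀ := by rw [hDB, Matrix.mul_assoc]
end
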